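/- Let $(\Phi_\alpha)_{\alpha>0}$ be a regularizing filter and $(u_\lambda,\mathcal{V}_\lambda^*,\kappa_\lambda)$ a TI-DFD for the closed injective operator $\mathcal{K}$ with dual TI-frame $(w_\lambda)$. Then for every $g\in\mathrm{ran}(\mathcal{K})$, $\lim_{\alpha\to 0}\mathcal{R}_\alpha^\Phi g = \mathcal{K}^{-1}g$ in $L^2(\mathbb{R}^d)$, where $\mathcal{R}_\alpha^\Phi g = \sum_\lambda w_\lambda\ast(\Phi_\alpha(\kappa_\lambda)\mathcal{V}_\lambda^* g)$. -/

import Mathlib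

open MeasureTheory Complex Real
open scoped Classical

set_option maxHeartbeats 2000000
set_option synthInstance.maxHeartbeats 400000

noncomputable section

/-- `Ed d` is Euclidean space `ℝ^d`. -/
abbrev Ed (d : ℕ) := EuclideanSpace ℝ (Fin d)

/-- `L2 d` is the Hilbert space `L²(ℝ^d, ℂ)`. -/
abbrev L2 (d : ℕ) := MeasureTheory.Lp ℂ 2 (volume : Measure (Ed d))

/-- An extension of the Fourier transform (normalization `f̂(ξ) = ∫ f(x) e^{-i⟨ξ,x⟩} dx`)
to a linear bijection of `L²(ℝ^d)` satisfying the Plancherel identity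
`‖f̂‖² = (2π)^d ‖f‖²`. -/
structure FourierL2 (d : ℕ) where
  F : L2 d ≃ₗ[ℂ] L2 d
  plancherel : ∀ f : L2 d, ‖F f‖ ^ 2 = (2 * Real.pi) ^ d * ‖f‖ ^ 2
  eq_integral : ∀ f : L2 d, MeasureTheory.Integrable (f : Ed d → ℂ) →
    (F f : Ed d → ℂ) =ᵐ[volume]
      fun ξ => ∫ x, Complex.exp (-(Complex.I * ((inner ℝ ξ x : ℝ) : ℂ))) * f x

/-- The convolution `u^* ∗ f := 𝓕⁻¹((conj 𝓕u) ⬝ 𝓕f)`, well defined in `L²` whenever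
`𝓕u ∈ L^∞`. -/
def starConv {d : ℕ} (Φ : FourierL2 d) (u f : L2 d) : L2 d :=
  if h : MemLp (fun ξ => (starRingEnd ℂ) ((Φ.F u : Ed d → ℂ) ξ) * (Φ.F f : Ed d → ℂ) ξ)
      2 (volume : Measure (Ed d))
  then Φ.F.symm (h.toLp _) else 0

/-- The convolution `w ∗ c := 𝓕⁻¹((𝓕w) ⬝ 𝓕c)`, well defined in `L²` whenever
`𝓕w ∈ L^∞`. -/
def conv {d : ℕ} (Φ : FourierL2 d) (w c : L2 d) : L2 d :=
  if h : MemLp (fun ξ => (Φ.F w : Ed d → ℂ) ξ * (Φ.F c : Ed d → ℂ) ξ)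
      2 (volume : Measure (Ed d))
  then Φ.F.symm (h.toLp _) else 0

/-- `(u_λ)` is a translation invariant frame of `L²(ℝ^d)` with bounds `A, B`:
all `𝓕u_λ ∈ L^∞` and `A‖f‖² ≤ ∑_λ ‖u_λ^* ∗ f‖² ≤ B‖f‖²` for every `f ∈ L²`. -/
def IsTIFrame {d : ℕ} {Λ : Type*} (Φ : FourierL2 d) (u : Λ → L2 d) (A B : ℝ) : Prop :=
  (∀ l : Λ, MemLp ((Φ.F (u l) : Ed d → ℂ)) ⊤ (volume : Measure (Ed d))) ∧
  0 < A ∧ 0 < B ∧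
  ∀ f : L2 d,
    A * ‖f‖ ^ 2 ≤ ∑' l : Λ, ‖starConv Φ (u l) f‖ ^ 2 ∧
    ∑' l : Λ, ‖starConv Φ (u l) f‖ ^ 2 ≤ B * ‖f‖ ^ 2

namespace TIDFD

variable {d : ℕ}

local notation "⟪" x ", " y "⟫" => @inner ℂ _ _ x y

lemma norm_F (Φ : FourierL2 d) (f : L2 d) :
    ‖Φ.F f‖ = Real.sqrt ((2*Real.pi)^d) * ‖f‖ := by
  have h2 : (0:ℝ) < (2*Real.pi)^d := by positivity
  rw [← Real.sqrt_sq (norm_nonneg (Φ.F f)), Φ.plancherel f, Real.sqrt_mul h2.le,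
    Real.sqrt_sq (norm_nonneg f)]

lemma inner_F (Φ : FourierL2 d) (f g : L2 d) :
    ⟪Φ.F f, Φ.F g⟫ = (((2*Real.pi)^d : ℝ) : ℂ) * ⟪f, g⟫ := by
  have h2 : (0:ℝ) < (2*Real.pi)^d := by positivity
  set s : ℝ := Real.sqrt ((2*Real.pi)^d) with hs
  have hspos : 0 < s := Real.sqrt_pos.2 h2
  set T : L2 d →ₗᵢ[ℂ] L2 d :=
    { toLinearMap := ((s⁻¹ : ℝ) : ℂ) • (Φ.F : L2 d →ₗ[ℂ] L2 d)
      norm_map' := by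
        intro x
        simp only [LinearMap.smul_apply, norm_smul, LinearEquiv.coe_coe, Complex.norm_real,
          Real.norm_eq_abs, abs_of_pos (inv_pos.2 hspos)]
        rw [norm_F Φ x, ← hs]
        field_simp } with hT
  have hmap := T.inner_map_map f g
  simp only [hT, LinearIsometry.coe_mk, LinearMap.smul_apply, LinearEquiv.coe_coe,
    inner_smul_left, inner_smul_right, Complex.conj_ofReal] at hmap
  have hcast : (((s⁻¹:ℝ)) : ℂ) ≠ 0 := by
    simpa using (inv_pos.2 hspos).ne'
  have hs2 : ((s:ℂ))^2 = (((2*Real.pi)^d : ℝ) : ℂ) := by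
    rw [← Complex.ofReal_pow]
    norm_cast
    exact Real.sq_sqrt h2.le
  have hX : ⟪Φ.F f, Φ.F g⟫ = ((s:ℂ))^2 * ⟪f, g⟫ := by
    have hsc : (((s⁻¹:ℝ)) : ℂ) = ((s:ℂ))⁻¹ := by push_cast; ring
    rw [hsc] at hmap
    have hsne : ((s:ℂ)) ≠ 0 := by simpa using hspos.ne'
    field_simp at hmap
    rw [hmap]
  rw [hX, hs2]

lemma inner_F_symm (Φ : FourierL2 d) (x h : L2 d) :
    ⟪(Φ.F.symm x : L2 d), h⟫ = ((((2*Real.pi)^d : ℝ) : ℂ))⁻¹ * ⟪x, Φ.F h⟫ := by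
  have h2 : (0:ℝ) < (2*Real.pi)^d := by positivity
  have hne : ((((2*Real.pi)^d : ℝ)) : ℂ) ≠ 0 := by
    simpa using h2.ne'
  have := inner_F Φ (Φ.F.symm x) h
  rw [Φ.F.apply_symm_apply] at this
  rw [this, ← mul_assoc, inv_mul_cancel₀ hne, one_mul]


lemma memP (Φ : FourierL2 d) {w : L2 d}
    (hw : MemLp ((Φ.F w : Ed d → ℂ)) ⊤ (volume : Measure (Ed d))) (c : L2 d) :
    MemLp (fun ξ => (Φ.F w : Ed d → ℂ) ξ * (Φ.F c : Ed d → ℂ) ξ)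
      2 (volume : Measure (Ed d)) := by
  have hmem := MemLp.smul (r := 2) hw (Lp.memLp (Φ.F c))
  have heq : ((Φ.F c : Ed d → ℂ) • (Φ.F w : Ed d → ℂ))
      = fun ξ => (Φ.F w : Ed d → ℂ) ξ * (Φ.F c : Ed d → ℂ) ξ := by
    funext ξ; simp [mul_comm]
  rwa [heq] at hmem

lemma memQ (Φ : FourierL2 d) {w : L2 d}
    (hw : MemLp ((Φ.F w : Ed d → ℂ)) ⊤ (volume : Measure (Ed d))) (h : L2 d) :
    MemLp (fun ξ => (starRingEnd ℂ) ((Φ.F w : Ed d → ℂ) ξ) * (Φ.F h : Ed d → ℂ) ξ)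
      2 (volume : Measure (Ed d)) := by
  have hconj : MemLp (fun ξ => (starRingEnd ℂ) ((Φ.F w : Ed d → ℂ) ξ)) ⊤
      (volume : Measure (Ed d)) := by
    refine ⟨Complex.continuous_conj.comp_aestronglyMeasurable hw.1, ?_⟩
    have heq : eLpNorm (fun ξ => (starRingEnd ℂ) ((Φ.F w : Ed d → ℂ) ξ)) ⊤
        (volume : Measure (Ed d)) = eLpNorm ((Φ.F w : Ed d → ℂ)) ⊤ (volume : Measure (Ed d)) :=
      eLpNorm_congr_norm_ae (Filter.Eventually.of_forall fun ξ => RCLike.norm_conj _)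
    rw [heq]; exact hw.2
  have hmem := MemLp.smul (r := 2) hconj (Lp.memLp (Φ.F h))
  have heq : ((Φ.F h : Ed d → ℂ) • fun ξ => (starRingEnd ℂ) ((Φ.F w : Ed d → ℂ) ξ))
      = fun ξ => (starRingEnd ℂ) ((Φ.F w : Ed d → ℂ) ξ) * (Φ.F h : Ed d → ℂ) ξ := by
    funext ξ
    exact mul_comm _ _
  rwa [heq] at hmem

lemma conv_inner (Φ : FourierL2 d) {w : L2 d}
    (hw : MemLp ((Φ.F w : Ed d → ℂ)) ⊤ (volume : Measure (Ed d))) (c h : L2 d) :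
    ⟪conv Φ w c, h⟫ = ⟪c, starConv Φ w h⟫ := by
  have hP := memP Φ hw c
  have hQ := memQ Φ hw h
  unfold conv starConv
  rw [dif_pos hP, dif_pos hQ]
  rw [inner_F_symm]
  rw [show ⟪(c : L2 d), (Φ.F.symm (hQ.toLp _) : L2 d)⟫
      = (starRingEnd ℂ) ⟪(Φ.F.symm (hQ.toLp _) : L2 d), c⟫ from (inner_conj_symm _ _).symm]
  rw [inner_F_symm, map_mul, map_inv₀, Complex.conj_ofReal]
  congr 1
  rw [L2.inner_def, L2.inner_def, ← integral_conj]
  refine integral_congr_ae ?_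
  filter_upwards [hP.coeFn_toLp, hQ.coeFn_toLp] with a ha hb
  rw [RCLike.inner_apply, RCLike.inner_apply, ha, hb]
  simp only [map_mul, Complex.conj_conj]
  ring

lemma conv_sub (Φ : FourierL2 d) {w : L2 d}
    (hw : MemLp ((Φ.F w : Ed d → ℂ)) ⊤ (volume : Measure (Ed d))) (x y : L2 d) :
    conv Φ w (x - y) = conv Φ w x - conv Φ w y := by
  refine ext_inner_right ℂ fun v => ?_
  rw [conv_inner Φ hw, inner_sub_left, inner_sub_left, conv_inner Φ hw, conv_inner Φ hw]

lemma conv_zero (Φ : FourierL2 d) {w : L2 d}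
    (hw : MemLp ((Φ.F w : Ed d → ℂ)) ⊤ (volume : Measure (Ed d))) :
    conv Φ w 0 = 0 := by
  refine ext_inner_right ℂ fun v => ?_
  rw [conv_inner Φ hw]
  simp


lemma synth_bound (Φ : FourierL2 d) {Λ : Type*} (w : Λ → L2 d) {A B : ℝ}
    (hinf : ∀ l, MemLp ((Φ.F (w l) : Ed d → ℂ)) ⊤ (volume : Measure (Ed d)))
    (hA : 0 < A) (hB : 0 < B)
    (hbd : ∀ f : L2 d, A * ‖f‖ ^ 2 ≤ ∑' l : Λ, ‖starConv Φ (w l) f‖ ^ 2 ∧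
      ∑' l : Λ, ‖starConv Φ (w l) f‖ ^ 2 ≤ B * ‖f‖ ^ 2)
    (T : Finset Λ) (x : Λ → L2 d) :
    ‖∑ l ∈ T, conv Φ (w l) (x l)‖ ^ 2 ≤ B * ∑ l ∈ T, ‖x l‖ ^ 2 := by
  set S := ∑ l ∈ T, conv Φ (w l) (x l) with hS
  by_cases hS0 : S = 0
  · rw [hS0]
    simp only [norm_zero, ne_eq, OfNat.ofNat_ne_zero, not_false_eq_true, zero_pow]
    have : (0:ℝ) ≤ ∑ l ∈ T, ‖x l‖ ^ 2 := Finset.sum_nonneg fun l _ => sq_nonneg _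
    positivity
  · have hSpos : 0 < ‖S‖ := norm_pos_iff.mpr hS0
    have hsum : Summable (fun l : Λ => ‖starConv Φ (w l) S‖ ^ 2) := by
      by_contra hns
      have h0 := tsum_eq_zero_of_not_summable hns
      have h1 := (hbd S).1
      rw [h0] at h1
      nlinarith [mul_pos hA (mul_pos hSpos hSpos)]
    have e3 : ⟪S, S⟫ = ∑ l ∈ T, ⟪x l, starConv Φ (w l) S⟫ := by
      calc ⟪S, S⟫ = ∑ l ∈ T, ⟪conv Φ (w l) (x l), S⟫ := by rw [hS, sum_inner]
        _ = ∑ l ∈ T, ⟪x l, starConv Φ (w l) S⟫ :=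
          Finset.sum_congr rfl fun l _ => conv_inner Φ (hinf l) (x l) S
    have e4 : ‖S‖ ^ 2 ≤ ∑ l ∈ T, ‖x l‖ * ‖starConv Φ (w l) S‖ := by
      have e2 : ‖(⟪S, S⟫ : ℂ)‖ = ‖S‖ ^ 2 := by
        rw [inner_self_eq_norm_sq_to_K]
        rw [norm_pow]
        simp
      rw [← e2, e3]
      exact (norm_sum_le _ _).trans (Finset.sum_le_sum fun l _ => norm_inner_le_norm _ _)
    have e5 := Finset.sum_mul_sq_le_sq_mul_sq T (fun l => ‖x l‖)
      (fun l => ‖starConv Φ (w l) S‖)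
    have e6 : ∑ l ∈ T, ‖starConv Φ (w l) S‖ ^ 2 ≤ B * ‖S‖ ^ 2 :=
      (Summable.sum_le_tsum T (fun l _ => sq_nonneg _) hsum).trans (hbd S).2
    have hX : (0:ℝ) ≤ ∑ l ∈ T, ‖x l‖ ^ 2 := Finset.sum_nonneg fun l _ => sq_nonneg _
    have hP0 : (0:ℝ) ≤ ∑ l ∈ T, ‖x l‖ * ‖starConv Φ (w l) S‖ :=
      Finset.sum_nonneg fun l _ => mul_nonneg (norm_nonneg _) (norm_nonneg _)
    clear hS
    have hsq : ‖S‖ ^ 2 * ‖S‖ ^ 2 ≤ (∑ l ∈ T, ‖x l‖ ^ 2) * (B * ‖S‖ ^ 2) := by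
      calc ‖S‖ ^ 2 * ‖S‖ ^ 2 ≤ (∑ l ∈ T, ‖x l‖ * ‖starConv Φ (w l) S‖) ^ 2 := by
            nlinarith [e4, sq_nonneg ‖S‖]
        _ ≤ (∑ l ∈ T, ‖x l‖ ^ 2) * ∑ l ∈ T, ‖starConv Φ (w l) S‖ ^ 2 := e5
        _ ≤ (∑ l ∈ T, ‖x l‖ ^ 2) * (B * ‖S‖ ^ 2) := mul_le_mul_of_nonneg_left e6 hX
    have hS2 : (0:ℝ) < ‖S‖ ^ 2 := by positivity
    have := le_of_mul_le_mul_right (by linarith : ‖S‖ ^ 2 * ‖S‖ ^ 2 ≤ ((∑ l ∈ T, ‖x l‖ ^ 2) * B) * ‖S‖ ^ 2) hS2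
    linarith

end TIDFD

/-- For a regularizing filter `(Φ_α)` and a TI-DFD of the closed
injective operator `𝒦` with dual TI-frame `(w_λ)`, one has pointwise convergence
`ℛ_α g → 𝒦⁻¹ g` in `L²(ℝ^d)` as `α → 0`, for every `g ∈ ran 𝒦`, where
`ℛ_α g = ∑_λ w_λ ∗ (Φ_α(κ_λ) 𝒱_λ^* g)`. -/
theorem filtered_ti_dfd_pointwise_convergence {d : ℕ} {Λ : Type*} [Countable Λ]
    {Y : Type*} [NormedAddCommGroup Y] [InnerProductSpace ℂ Y] [CompleteSpace Y]
    (Φ : FourierL2 d)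
    (dom : Submodule ℂ (L2 d)) (K : dom →ₗ[ℂ] Y)
    (hclosed : IsClosed {p : L2 d × Y | ∃ hp : p.1 ∈ dom, K ⟨p.1, hp⟩ = p.2})
    (hinj : Function.Injective K)
    -- the TI-DFD (u, 𝒱^*, κ):
    (u : Λ → L2 d) (hu : ∃ A B : ℝ, IsTIFrame Φ u A B)
    (V : Λ → Y →L[ℂ] L2 d)
    (hV : ∃ A B : ℝ, 0 < A ∧ 0 < B ∧ ∀ g ∈ closure (Set.range fun f : dom => K f),
      A * ‖g‖ ^ 2 ≤ ∑' l : Λ, ‖V l g‖ ^ 2 ∧ ∑' l : Λ, ‖V l g‖ ^ 2 ≤ B * ‖g‖ ^ 2)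
    (κ : Λ → ℝ) (hκ : ∀ l, 0 < κ l)
    (hdiag : ∀ (f : dom) (l : Λ), V l (K f) = κ l • starConv Φ (u l) (f : L2 d))
    -- a dual TI-frame (w_λ):
    (w : Λ → L2 d) (hw : ∃ A B : ℝ, IsTIFrame Φ w A B)
    (hdual : ∀ h : L2 d, HasSum (fun l : Λ => conv Φ (w l) (starConv Φ (u l) h)) h)
    -- a regularizing filter (F1)-(F3):
    (Φfil : ℝ → ℝ → ℝ)
    (hF1 : ∀ α > (0 : ℝ), ∃ M : ℝ, ∀ k > (0 : ℝ), |Φfil α k| ≤ M)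
    (hF2 : ∃ C : ℝ, ∀ α > (0 : ℝ), ∀ k > (0 : ℝ), |k * Φfil α k| ≤ C)
    (hF3 : ∀ k > (0 : ℝ), Filter.Tendsto (fun α => Φfil α k)
      (nhdsWithin 0 (Set.Ioi 0)) (nhds (1 / k))) :
    ∀ (g : Y) (f : dom), K f = g →
      (∀ α > (0 : ℝ), ∃ s : L2 d,
        HasSum (fun l : Λ => conv Φ (w l) (Φfil α (κ l) • V l g)) s) ∧
      (∀ ε > (0 : ℝ), ∃ α₀ > (0 : ℝ), ∀ α : ℝ, 0 < α → α < α₀ →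
        ∀ s : L2 d, HasSum (fun l : Λ => conv Φ (w l) (Φfil α (κ l) • V l g)) s →
          ‖s - (f : L2 d)‖ < ε)
    := by
  classical
  obtain ⟨Au, Bu, huinf, hAu, hBu, hubd⟩ := hu
  obtain ⟨Aw, Bw, hwinf, hAw, hBw, hwbd⟩ := hw
  obtain ⟨C, hC⟩ := hF2
  have hC0 : 0 ≤ C := (abs_nonneg _).trans (hC 1 one_pos 1 one_pos)
  intro g f hfg
  have hVg : ∀ l, V l g = κ l • starConv Φ (u l) (f : L2 d) := fun l => by
    rw [← hfg]; exact hdiag f l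
  have hterm : ∀ (α : ℝ) (l : Λ),
      Φfil α (κ l) • V l g = (Φfil α (κ l) * κ l) • starConv Φ (u l) (f : L2 d) := fun α l => by
    rw [hVg l, smul_smul]
  by_cases hf0 : (f : L2 d) = 0
  · have hg0 : g = 0 := by
      rw [← hfg, show f = 0 from Subtype.ext (by simpa using hf0), map_zero]
    have hfn : ∀ α : ℝ,
        (fun l : Λ => conv Φ (w l) (Φfil α (κ l) • V l g)) = fun _ => (0 : L2 d) := by
      intro α; funext l
      rw [hg0, map_zero, smul_zero]
      exact TIDFD.conv_zero Φ (hwinf l)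
    refine ⟨fun α hα => ⟨0, by rw [hfn α]; exact hasSum_zero⟩, fun ε hε => ⟨1, one_pos, ?_⟩⟩
    intro α hα hα1 s hs
    rw [hfn α] at hs
    rw [hs.unique hasSum_zero, hf0, sub_zero, norm_zero]
    exact hε
  · have hfpos : 0 < ‖(f : L2 d)‖ := norm_pos_iff.mpr hf0
    have hbsum : Summable (fun l : Λ => ‖starConv Φ (u l) (f : L2 d)‖ ^ 2) := by
      by_contra hns
      have h0 := tsum_eq_zero_of_not_summable hns
      have h1 := (hubd (f : L2 d)).1
      rw [h0] at h1
      nlinarith [mul_pos hAu (mul_pos hfpos hfpos)]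
    constructor
    · -- Part 1: the series converges for every α > 0
      intro α hα
      have hsummable : Summable (fun l : Λ => conv Φ (w l) (Φfil α (κ l) • V l g)) := by
        rw [summable_iff_vanishing_norm]
        intro ε hε
        set KC : ℝ := Bw * C ^ 2 with hKC
        have hKC0 : 0 ≤ KC := by positivity
        set δ1 : ℝ := ε ^ 2 / (KC + 1) with hδ1
        have hδ1pos : 0 < δ1 := by positivity
        have hδeq : KC * δ1 + δ1 = ε ^ 2 := by
          rw [hδ1]
          field_simp
        obtain ⟨S₀, hS₀⟩ := summable_iff_vanishing_norm.1 hbsum _ hδ1pos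
        refine ⟨S₀, fun T hT => ?_⟩
        have hnn : (0:ℝ) ≤ ∑ l ∈ T, ‖starConv Φ (u l) (f : L2 d)‖ ^ 2 :=
          Finset.sum_nonneg fun l _ => sq_nonneg _
        have htail : ∑ l ∈ T, ‖starConv Φ (u l) (f : L2 d)‖ ^ 2 < δ1 := by
          have := hS₀ T hT
          rwa [Real.norm_of_nonneg hnn] at this
        have hbd1 : ‖∑ l ∈ T, conv Φ (w l) (Φfil α (κ l) • V l g)‖ ^ 2
            ≤ Bw * ∑ l ∈ T, ‖Φfil α (κ l) • V l g‖ ^ 2 :=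
          TIDFD.synth_bound Φ w hwinf hAw hBw hwbd T _
        have hbd2 : ∑ l ∈ T, ‖Φfil α (κ l) • V l g‖ ^ 2
            ≤ C ^ 2 * ∑ l ∈ T, ‖starConv Φ (u l) (f : L2 d)‖ ^ 2 := by
          rw [Finset.mul_sum]
          refine Finset.sum_le_sum fun l _ => ?_
          rw [hterm α l, norm_smul, Real.norm_eq_abs, mul_pow, _root_.sq_abs]
          have h1 : |Φfil α (κ l) * κ l| ≤ C := by
            rw [mul_comm]; exact hC α hα (κ l) (hκ l)
          have h2 : (Φfil α (κ l) * κ l) ^ 2 ≤ C ^ 2 := by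
            rw [← _root_.sq_abs]; exact pow_le_pow_left₀ (abs_nonneg _) h1 2
          exact mul_le_mul_of_nonneg_right h2 (sq_nonneg _)
        have h4 : ‖∑ l ∈ T, conv Φ (w l) (Φfil α (κ l) • V l g)‖ ^ 2
            ≤ KC * ∑ l ∈ T, ‖starConv Φ (u l) (f : L2 d)‖ ^ 2 := by
          calc ‖∑ l ∈ T, conv Φ (w l) (Φfil α (κ l) • V l g)‖ ^ 2
              ≤ Bw * ∑ l ∈ T, ‖Φfil α (κ l) • V l g‖ ^ 2 := hbd1
            _ ≤ Bw * (C ^ 2 * ∑ l ∈ T, ‖starConv Φ (u l) (f : L2 d)‖ ^ 2) :=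
                mul_le_mul_of_nonneg_left hbd2 hBw.le
            _ = KC * ∑ l ∈ T, ‖starConv Φ (u l) (f : L2 d)‖ ^ 2 := by rw [hKC]; ring
        have h5 : KC * ∑ l ∈ T, ‖starConv Φ (u l) (f : L2 d)‖ ^ 2 ≤ KC * δ1 :=
          mul_le_mul_of_nonneg_left htail.le hKC0
        exact lt_of_pow_lt_pow_left₀ 2 hε.le (by linarith)
      exact ⟨_, hsummable.hasSum⟩
    · -- Part 2: convergence as α → 0
      intro ε hε
      set D : ℝ := Bw * (1 + (C + 1) ^ 2) + 1 with hD
      have hDpos : 0 < D := by positivity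
      set δ : ℝ := ε ^ 2 / (2 * D) with hδdef
      have hδpos : 0 < δ := by positivity
      obtain ⟨S₀, hS₀⟩ := summable_iff_vanishing_norm.1 hbsum δ hδpos
      set δ' : ℝ := δ / (S₀.card + 1) with hδ'def
      have hδ'pos : 0 < δ' := by positivity
      have hev : ∀ᶠ α in nhdsWithin (0:ℝ) (Set.Ioi 0), ∀ l ∈ S₀,
          (Φfil α (κ l) * κ l - 1) ^ 2 * ‖starConv Φ (u l) (f : L2 d)‖ ^ 2 < δ' := by
        rw [Filter.eventually_all_finset]
        intro l hl
        have h1 : Filter.Tendsto (fun α => Φfil α (κ l) * κ l)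
            (nhdsWithin 0 (Set.Ioi 0)) (nhds 1) := by
          have := (hF3 (κ l) (hκ l)).mul_const (κ l)
          rwa [one_div, inv_mul_cancel₀ (ne_of_gt (hκ l))] at this
        have h2 : Filter.Tendsto
            (fun α => (Φfil α (κ l) * κ l - 1) ^ 2 * ‖starConv Φ (u l) (f : L2 d)‖ ^ 2)
            (nhdsWithin 0 (Set.Ioi 0)) (nhds 0) := by
          have := ((h1.sub_const 1).pow 2).mul_const (‖starConv Φ (u l) (f : L2 d)‖ ^ 2)
          simpa using this
        exact h2.eventually_lt_const hδ'pos
      rw [Filter.eventually_iff] at hev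
      obtain ⟨α₀, hα₀mem, hα₀⟩ := mem_nhdsGT_iff_exists_Ioo_subset.1 hev
      refine ⟨α₀, hα₀mem, fun α hα hαlt s hs => ?_⟩
      have hP : ∀ l ∈ S₀,
          (Φfil α (κ l) * κ l - 1) ^ 2 * ‖starConv Φ (u l) (f : L2 d)‖ ^ 2 < δ' :=
        hα₀ ⟨hα, hαlt⟩
      -- rewrite the given sum
      have hs' : HasSum (fun l : Λ =>
          conv Φ (w l) ((Φfil α (κ l) * κ l) • starConv Φ (u l) (f : L2 d))) s := by
        have hfn : (fun l : Λ => conv Φ (w l) (Φfil α (κ l) • V l g))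
            = fun l : Λ => conv Φ (w l) ((Φfil α (κ l) * κ l) • starConv Φ (u l) (f : L2 d)) :=
          funext fun l => by rw [hterm α l]
        rwa [hfn] at hs
      have ha : HasSum (fun l : Λ => conv Φ (w l) (starConv Φ (u l) (f : L2 d))) (f : L2 d) :=
        hdual _
      have hd : HasSum (fun l : Λ =>
          conv Φ (w l) ((Φfil α (κ l) * κ l - 1) • starConv Φ (u l) (f : L2 d)))
          (s - (f : L2 d)) := by
        have h0 := hs'.sub ha
        have hfn : (fun l : Λ =>
            conv Φ (w l) ((Φfil α (κ l) * κ l) • starConv Φ (u l) (f : L2 d))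
              - conv Φ (w l) (starConv Φ (u l) (f : L2 d)))
            = fun l : Λ =>
              conv Φ (w l) ((Φfil α (κ l) * κ l - 1) • starConv Φ (u l) (f : L2 d)) := by
          funext l
          rw [← TIDFD.conv_sub Φ (hwinf l), sub_smul, one_smul]
        rwa [hfn] at h0
      -- bound the partial sums
      have hbound : ∀ T : Finset Λ,
          ‖∑ l ∈ T, conv Φ (w l) ((Φfil α (κ l) * κ l - 1) • starConv Φ (u l) (f : L2 d))‖ ^ 2
            ≤ ε ^ 2 / 2 := by
        intro T
        have h1 := TIDFD.synth_bound Φ w hwinf hAw hBw hwbd T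
          (fun l => (Φfil α (κ l) * κ l - 1) • starConv Φ (u l) (f : L2 d))
        have h2 : ∀ l : Λ, ‖(Φfil α (κ l) * κ l - 1) • starConv Φ (u l) (f : L2 d)‖ ^ 2
            = (Φfil α (κ l) * κ l - 1) ^ 2 * ‖starConv Φ (u l) (f : L2 d)‖ ^ 2 := fun l => by
          rw [norm_smul, Real.norm_eq_abs, mul_pow, _root_.sq_abs]
        have hsplit :
            ∑ l ∈ T ∩ S₀, (Φfil α (κ l) * κ l - 1) ^ 2 * ‖starConv Φ (u l) (f : L2 d)‖ ^ 2
            + ∑ l ∈ T \ S₀, (Φfil α (κ l) * κ l - 1) ^ 2 * ‖starConv Φ (u l) (f : L2 d)‖ ^ 2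
            = ∑ l ∈ T, (Φfil α (κ l) * κ l - 1) ^ 2 * ‖starConv Φ (u l) (f : L2 d)‖ ^ 2 :=
          Finset.sum_inter_add_sum_sdiff T S₀ _
        have hin : ∑ l ∈ T ∩ S₀,
            (Φfil α (κ l) * κ l - 1) ^ 2 * ‖starConv Φ (u l) (f : L2 d)‖ ^ 2 ≤ δ := by
          have hc1 : ∑ l ∈ T ∩ S₀,
              (Φfil α (κ l) * κ l - 1) ^ 2 * ‖starConv Φ (u l) (f : L2 d)‖ ^ 2
              ≤ ∑ _l ∈ T ∩ S₀, δ' :=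
            Finset.sum_le_sum fun l hl => (hP l (Finset.mem_inter.1 hl).2).le
          have hc2 : ((T ∩ S₀).card : ℝ) ≤ (S₀.card : ℝ) := by
            exact_mod_cast Finset.card_le_card (Finset.inter_subset_right)
          have hc3 : ((S₀.card : ℝ)) * δ' ≤ δ := by
            rw [hδ'def, mul_div_assoc']
            rw [div_le_iff₀ (by positivity : (0:ℝ) < (S₀.card : ℝ) + 1)]
            nlinarith [hδpos]
          calc ∑ l ∈ T ∩ S₀,
              (Φfil α (κ l) * κ l - 1) ^ 2 * ‖starConv Φ (u l) (f : L2 d)‖ ^ 2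
              ≤ ((T ∩ S₀).card : ℝ) * δ' := by
                rw [Finset.sum_const, nsmul_eq_mul] at hc1
                exact hc1
            _ ≤ ((S₀.card : ℝ)) * δ' := mul_le_mul_of_nonneg_right hc2 hδ'pos.le
            _ ≤ δ := hc3
        have hout : ∑ l ∈ T \ S₀,
            (Φfil α (κ l) * κ l - 1) ^ 2 * ‖starConv Φ (u l) (f : L2 d)‖ ^ 2
            ≤ (C + 1) ^ 2 * δ := by
          have htail : ∑ l ∈ T \ S₀, ‖starConv Φ (u l) (f : L2 d)‖ ^ 2 ≤ δ := by
            have hnn : (0:ℝ) ≤ ∑ l ∈ T \ S₀, ‖starConv Φ (u l) (f : L2 d)‖ ^ 2 :=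
              Finset.sum_nonneg fun l _ => sq_nonneg _
            have := hS₀ (T \ S₀) Finset.sdiff_disjoint
            rw [Real.norm_of_nonneg hnn] at this
            exact this.le
          have hstep : ∑ l ∈ T \ S₀,
              (Φfil α (κ l) * κ l - 1) ^ 2 * ‖starConv Φ (u l) (f : L2 d)‖ ^ 2
              ≤ (C + 1) ^ 2 * ∑ l ∈ T \ S₀, ‖starConv Φ (u l) (f : L2 d)‖ ^ 2 := by
            rw [Finset.mul_sum]
            refine Finset.sum_le_sum fun l _ => ?_
            have hcl : |Φfil α (κ l) * κ l| ≤ C := by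
              rw [mul_comm]; exact hC α hα (κ l) (hκ l)
            have hsq2 : (Φfil α (κ l) * κ l - 1) ^ 2 ≤ (C + 1) ^ 2 := by
              rcases abs_le.1 hcl with ⟨hl1, hl2⟩
              nlinarith
            exact mul_le_mul_of_nonneg_right hsq2 (sq_nonneg _)
          exact hstep.trans (mul_le_mul_of_nonneg_left htail (by positivity))
        calc ‖∑ l ∈ T, conv Φ (w l)
              ((Φfil α (κ l) * κ l - 1) • starConv Φ (u l) (f : L2 d))‖ ^ 2
            ≤ Bw * ∑ l ∈ T,
              ‖(Φfil α (κ l) * κ l - 1) • starConv Φ (u l) (f : L2 d)‖ ^ 2 := h1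
          _ = Bw * ∑ l ∈ T,
              (Φfil α (κ l) * κ l - 1) ^ 2 * ‖starConv Φ (u l) (f : L2 d)‖ ^ 2 := by
              simp_rw [h2]
          _ ≤ Bw * (δ + (C + 1) ^ 2 * δ) := by
              refine mul_le_mul_of_nonneg_left ?_ hBw.le
              rw [← hsplit]
              linarith [hin, hout]
          _ = (Bw * (1 + (C + 1) ^ 2)) * δ := by ring
          _ ≤ D * δ := mul_le_mul_of_nonneg_right (by rw [hD]; linarith) hδpos.le
          _ = ε ^ 2 / 2 := by
              rw [hδdef]
              field_simp
      have hlim : Filter.Tendsto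
          (fun T : Finset Λ => ‖∑ l ∈ T,
            conv Φ (w l) ((Φfil α (κ l) * κ l - 1) • starConv Φ (u l) (f : L2 d))‖ ^ 2)
          Filter.atTop (nhds (‖s - (f : L2 d)‖ ^ 2)) :=
        ((continuous_norm.pow 2).tendsto (s - (f : L2 d))).comp hd
      have hle : ‖s - (f : L2 d)‖ ^ 2 ≤ ε ^ 2 / 2 :=
        le_of_tendsto hlim (Filter.Eventually.of_forall hbound)
      have hlt : ‖s - (f : L2 d)‖ ^ 2 < ε ^ 2 := by nlinarith [pow_pos hε 2]
      exact lt_of_pow_lt_pow_left₀ 2 hε.le hlt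

end
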